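/- For all sufficiently large n, there exists a set S ⊆ F_2^N with N = Θ(n²) such that S spans Ω(√N) distinct Hamming distances but every rainbow subset of S has size at most 2. -/
import Mathlib

/-- A set is rainbow if all pairwise Hamming distances among distinct points are
distinct. -/
def IsRainbow {α : Type*} [DecidableEq α] {N : ℕ} (R : Finset (Fin N → α)) : Prop :=
  ∀ x ∈ R, ∀ y ∈ R, ∀ u ∈ R, ∀ v ∈ R, x ≠ y → u ≠ v →
    hammingDist x y = hammingDist u v → ({x, y} : Finset (Fin N → α)) = {u, v}

/-- Point `k` of the staircase construction inside `F_2^N`. -/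
def fvec (N n k : ℕ) : Fin N → ZMod 2 := fun t =>
  if t.val < k ∨ (n + Nat.choose k 2 ≤ t.val ∧ t.val < n + Nat.choose (k + 1) 2) then 1 else 0

lemma fvec_key (N n : ℕ) {i j : ℕ} (hij : i < j) (hjn : j ≤ n)
    (hN : n + Nat.choose (j + 1) 2 ≤ N) :
    hammingDist (fvec N n i) (fvec N n j) = 2 * j := by
  classical
  have hTgen : ∀ k : ℕ, Nat.choose (k + 1) 2 = Nat.choose k 2 + k := by
    intro k
    have h := Nat.choose_succ_succ k 1
    simp [Nat.choose_one_right, Nat.succ_eq_add_one] at h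
    omega
  have hTi := hTgen i
  have hTj := hTgen j
  have hmono : Nat.choose (i + 1) 2 ≤ Nat.choose j 2 := Nat.choose_le_choose 2 hij
  set U : Finset ℕ := Finset.Ico i j ∪ Finset.Ico (n + Nat.choose i 2) (n + Nat.choose (i + 1) 2)
      ∪ Finset.Ico (n + Nat.choose j 2) (n + Nat.choose (j + 1) 2) with hU
  have hpt : ∀ t : Fin N, (fvec N n i t ≠ fvec N n j t) ↔
      ¬((t.val < i ∨ (n + Nat.choose i 2 ≤ t.val ∧ t.val < n + Nat.choose (i + 1) 2)) ↔
        (t.val < j ∨ (n + Nat.choose j 2 ≤ t.val ∧ t.val < n + Nat.choose (j + 1) 2))) := by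
    intro t
    unfold fvec
    by_cases hA : (t.val < i ∨ (n + Nat.choose i 2 ≤ t.val ∧ t.val < n + Nat.choose (i + 1) 2)) <;>
      by_cases hB : (t.val < j ∨ (n + Nat.choose j 2 ≤ t.val ∧ t.val < n + Nat.choose (j + 1) 2)) <;>
        simp [hA, hB]
  have hcard : (Finset.filter (fun t : Fin N => fvec N n i t ≠ fvec N n j t) Finset.univ).card
      = U.card := by
    apply Finset.card_bij (fun t _ => t.val)
    · intro t ht
      simp only [Finset.mem_filter, Finset.mem_univ, true_and] at ht
      rw [hpt] at ht
      simp only [hU, Finset.mem_union, Finset.mem_Ico]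
      omega
    · intro a ha b hb h
      exact Fin.val_injective h
    · intro m hm
      simp only [hU, Finset.mem_union, Finset.mem_Ico] at hm
      have hmN : m < N := by omega
      refine ⟨⟨m, hmN⟩, ?_, rfl⟩
      simp only [Finset.mem_filter, Finset.mem_univ, true_and]
      rw [hpt]
      simp only
      omega
  have hUcard : U.card = 2 * j := by
    rw [hU, Finset.card_union_of_disjoint, Finset.card_union_of_disjoint]
    · simp only [Nat.card_Ico]; omega
    · rw [Finset.disjoint_left]; intro m hm hm'
      simp only [Finset.mem_Ico] at hm hm'; omega
    · rw [Finset.disjoint_left]; intro m hm hm'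
      simp only [Finset.mem_union, Finset.mem_Ico] at hm hm'; omega
  show (Finset.filter (fun t : Fin N => fvec N n i t ≠ fvec N n j t) Finset.univ).card = 2 * j
  rw [hcard, hUcard]

lemma fvec_dist (N n : ℕ) {a b : ℕ} (hab : a ≠ b) (han : a ≤ n) (hbn : b ≤ n)
    (hN : ∀ j ≤ n, n + Nat.choose (j + 1) 2 ≤ N) :
    hammingDist (fvec N n a) (fvec N n b) = 2 * max a b := by
  rcases Nat.lt_or_ge a b with h | h
  · rw [fvec_key N n h hbn (hN b hbn)]; omega
  · have h' : b < a := by omega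
    rw [hammingDist_comm, fvec_key N n h' han (hN a han)]; omega

/-- for all sufficiently large `n` there exist `N = Θ(n²)` and
`S ⊆ 𝔽₂^N` spanning `Ω(√N)` distinct Hamming distances while every rainbow subset
of `S` has size at most 2. -/
theorem stmt12 :
    ∃ c : ℝ, 0 < c ∧ ∃ n₀ : ℕ, ∀ n ≥ n₀, ∃ N : ℕ, ∃ S : Finset (Fin N → ZMod 2),
      n ^ 2 ≤ N ∧ N ≤ 3 * n ^ 2 ∧
      c * Real.sqrt N ≤ (((S ×ˢ S).image fun p => hammingDist p.1 p.2).card : ℝ) ∧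
      ∀ R ⊆ S, IsRainbow R → R.card ≤ 2 := by
  refine ⟨1 / 2, by norm_num, 1, fun n hn => ?_⟩
  set N := 2 * n ^ 2 with hNdef
  have hn2 : n ≤ n ^ 2 := Nat.le_self_pow two_ne_zero n
  have hB : ∀ j ≤ n, n + Nat.choose (j + 1) 2 ≤ N := by
    intro j hj
    have h1 : Nat.choose (j + 1) 2 ≤ Nat.choose (n + 1) 2 := Nat.choose_le_choose 2 (by omega)
    have h2 : Nat.choose (n + 1) 2 = (n + 1) * n / 2 := by
      rw [Nat.choose_two_right]; simp
    have h3 : (n + 1) * n / 2 ≤ n ^ 2 := by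
      apply Nat.div_le_of_le_mul  -- may not exist; fallback below
      nlinarith
    omega
  set S : Finset (Fin N → ZMod 2) := (Finset.range (n + 1)).image (fvec N n) with hS
  refine ⟨N, S, Nat.le_mul_of_pos_left (n ^ 2) (by norm_num), Nat.mul_le_mul_right (n ^ 2) (by norm_num), ?_, ?_⟩
  · -- many distances
    have hsub : ∀ j ∈ Finset.range (n + 1),
        2 * j ∈ (S ×ˢ S).image fun p => hammingDist p.1 p.2 := by
      intro j hj
      simp only [Finset.mem_range] at hj
      have hm0 : fvec N n 0 ∈ S := Finset.mem_image.2 ⟨0, by simp, rfl⟩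
      have hmj : fvec N n j ∈ S := Finset.mem_image.2 ⟨j, by simp [Finset.mem_range]; omega, rfl⟩
      rcases Nat.eq_zero_or_pos j with rfl | hjpos
      · exact Finset.mem_image.2 ⟨(fvec N n 0, fvec N n 0),
          Finset.mem_product.2 ⟨hm0, hm0⟩, by simp [hammingDist_self]⟩
      · exact Finset.mem_image.2 ⟨(fvec N n 0, fvec N n j),
          Finset.mem_product.2 ⟨hm0, hmj⟩, fvec_key N n hjpos (by omega) (hB j (by omega))⟩
    have hcardle : n + 1 ≤ ((S ×ˢ S).image fun p => hammingDist p.1 p.2).card := by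
      have := Finset.card_le_card_of_injOn (fun j => 2 * j) hsub
        (fun a _ b _ h => by simp only at h; omega)
      simpa using this
    have hsqrt : Real.sqrt N ≤ 2 * n := by
      have h4 : (N : ℝ) ≤ ((2 * n : ℕ) : ℝ) ^ 2 := by push_cast [hNdef]; nlinarith
      calc Real.sqrt N ≤ Real.sqrt (((2 * n : ℕ) : ℝ) ^ 2) := Real.sqrt_le_sqrt h4
        _ = ((2 * n : ℕ) : ℝ) := Real.sqrt_sq (by positivity)
        _ = 2 * n := by push_cast; ring
    have : (1 / 2 : ℝ) * Real.sqrt N ≤ n := by nlinarith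
    have hc : ((n : ℝ) + 1) ≤ (((S ×ˢ S).image fun p => hammingDist p.1 p.2).card : ℝ) := by
      exact_mod_cast hcardle
    linarith
  · -- no rainbow triple
    intro R hR hRain
    by_contra hcontra
    push_neg at hcontra
    obtain ⟨x, y, z, hx, hy, hz, hxy, hxz, hyz⟩ := Finset.two_lt_card_iff.1 hcontra
    obtain ⟨a, ha, rfl⟩ := Finset.mem_image.1 (hR hx)
    obtain ⟨b, hb, rfl⟩ := Finset.mem_image.1 (hR hy)
    obtain ⟨c, hc, rfl⟩ := Finset.mem_image.1 (hR hz)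
    simp only [Finset.mem_range] at ha hb hc
    have hab : a ≠ b := fun h => hxy (by rw [h])
    have hac : a ≠ c := fun h => hxz (by rw [h])
    have hbc : b ≠ c := fun h => hyz (by rw [h])
    have key : ∀ p q : Fin N → ZMod 2, p ∈ R → q ∈ R → ∀ r ∈ R,
        p ≠ q → p ≠ r → q ≠ r → hammingDist p r = hammingDist q r → False := by
      intro p q hp hq r hr hpq hpr hqr heq
      have h := hRain p hp r hr q hq r hr hpr hqr heq
      have hmem : p ∈ ({q, r} : Finset (Fin N → ZMod 2)) := by
        rw [← h]; simp
      simp only [Finset.mem_insert, Finset.mem_singleton] at hmem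
      tauto
    rcases (show (a < c ∧ b < c) ∨ (a < b ∧ c < b) ∨ (b < a ∧ c < a) by omega) with
      ⟨h1, h2⟩ | ⟨h1, h2⟩ | ⟨h1, h2⟩
    · exact key _ _ hx hy _ hz hxy hxz hyz (by
        rw [fvec_dist N n hac (by omega) (by omega) hB,
            fvec_dist N n hbc (by omega) (by omega) hB]; omega)
    · exact key _ _ hx hz _ hy hxz hxy (Ne.symm hyz) (by
        rw [fvec_dist N n hab (by omega) (by omega) hB,
            fvec_dist N n (Ne.symm hbc) (by omega) (by omega) hB]; omega)
    · exact key _ _ hy hz _ hx hyz (Ne.symm hxy) (Ne.symm hxz) (by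
        rw [fvec_dist N n (Ne.symm hab) (by omega) (by omega) hB,
            fvec_dist N n (Ne.symm hac) (by omega) (by omega) hB]; omega)
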